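/- Every connected finite simple graph with exactly 2, 3, or 4 vertices is reducible. -/

import Mathlib

/-- `x ≈ y`: equal or adjacent. A reduction of `G` is a non-surjective map `f`
with `f x ≈ x` for all `x`, and `x ≈ y → f x ≈ f y`. -/
def SimpleGraph.IsReduction {V : Type*} (G : SimpleGraph V) (f : V → V) : Prop :=
  ¬ Function.Surjective f ∧
  (∀ x, f x = x ∨ G.Adj (f x) x) ∧
  (∀ x y, (x = y ∨ G.Adj x y) → (f x = f y ∨ G.Adj (f x) (f y)))

/-- A graph is reducible if it admits a reduction. -/
def SimpleGraph.Reducible {V : Type*} (G : SimpleGraph V) : Prop :=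
  ∃ f : V → V, G.IsReduction f

/-- The cycle graph on `ZMod n`. -/
def cycleGraph (n : ℕ) : SimpleGraph (ZMod n) :=
  SimpleGraph.fromRel (fun x y => y = x + 1)

/-- Symmetric adjacency matrix on `Fin 2` from one bit. -/
def mkA2 (a : Bool) : Fin 2 → Fin 2 → Bool := ![![false, a], ![a, false]]

/-- Symmetric adjacency matrix on `Fin 3` from three bits. -/
def mkA3 (a b c : Bool) : Fin 3 → Fin 3 → Bool :=
  ![![false, a, b], ![a, false, c], ![b, c, false]]

/-- Symmetric adjacency matrix on `Fin 4` from six bits. -/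
def mkA4 (a b c d e f : Bool) : Fin 4 → Fin 4 → Bool :=
  ![![false, a, b, c], ![a, false, d, e], ![b, d, false, f], ![c, e, f, false]]

theorem key2 (a : Bool) :
    (∀ i j, ∃ p q, (i = p ∨ mkA2 a i p) ∧ (p = q ∨ mkA2 a p q) ∧ (q = j ∨ mkA2 a q j)) →
    ∃ g : Fin 2 → Fin 2, (∃ z, ∀ x, g x ≠ z) ∧
      (∀ x, g x = x ∨ mkA2 a (g x) x) ∧
      (∀ x y, mkA2 a x y → (g x = g y ∨ mkA2 a (g x) (g y))) := by revert a; decide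

theorem key3 (a b c : Bool) :
    (∀ i j, ∃ p q, (i = p ∨ mkA3 a b c i p) ∧ (p = q ∨ mkA3 a b c p q) ∧ (q = j ∨ mkA3 a b c q j)) →
    ∃ g : Fin 3 → Fin 3, (∃ z, ∀ x, g x ≠ z) ∧
      (∀ x, g x = x ∨ mkA3 a b c (g x) x) ∧
      (∀ x y, mkA3 a b c x y → (g x = g y ∨ mkA3 a b c (g x) (g y))) := by
  revert a b c; decide

set_option maxHeartbeats 16000000 in
theorem key4 (a b c d e f : Bool) :
    (∀ i j, ∃ p q, (i = p ∨ mkA4 a b c d e f i p) ∧ (p = q ∨ mkA4 a b c d e f p q) ∧ (q = j ∨ mkA4 a b c d e f q j)) →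
    ∃ g : Fin 4 → Fin 4, (∃ z, ∀ x, g x ≠ z) ∧
      (∀ x, g x = x ∨ mkA4 a b c d e f (g x) x) ∧
      (∀ x y, mkA4 a b c d e f x y → (g x = g y ∨ mkA4 a b c d e f (g x) (g y))) := by
  revert a b c d e f
  decide

theorem walk_P3 {V : Type*} {G : SimpleGraph V} {u v : V} (w : G.Walk u v) (h : w.length ≤ 3) :
    ∃ a b : V, (u = a ∨ G.Adj u a) ∧ (a = b ∨ G.Adj a b) ∧ (b = v ∨ G.Adj b v) := by
  match w with
  | .nil => exact ⟨u, u, Or.inl rfl, Or.inl rfl, Or.inl rfl⟩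
  | .cons h1 .nil => exact ⟨v, v, Or.inr h1, Or.inl rfl, Or.inl rfl⟩
  | .cons (v := x1) h1 (.cons h2 .nil) => exact ⟨x1, v, Or.inr h1, Or.inr h2, Or.inl rfl⟩
  | .cons (v := x1) h1 (.cons (v := x2) h2 (.cons h3 .nil)) =>
      exact ⟨x1, x2, Or.inr h1, Or.inr h2, Or.inr h3⟩
  | .cons h1 (.cons h2 (.cons h3 (.cons h4 w4))) =>
      simp [SimpleGraph.Walk.length_cons] at h
      omega

theorem build {V : Type*} [Fintype V] (G : SimpleGraph V) {n : ℕ} (e : V ≃ Fin n)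
    (A : Fin n → Fin n → Bool)
    (hA : ∀ i j, A i j = true ↔ G.Adj (e.symm i) (e.symm j))
    (key : (∀ i j, ∃ p q, (i = p ∨ A i p) ∧ (p = q ∨ A p q) ∧ (q = j ∨ A q j)) →
      ∃ g : Fin n → Fin n, (∃ z, ∀ x, g x ≠ z) ∧ (∀ x, g x = x ∨ A (g x) x) ∧
        (∀ x y, A x y → (g x = g y ∨ A (g x) (g y))))
    (hconn : G.Connected) (hcard : Fintype.card V ≤ 4) : G.Reducible := by
  classical
  obtain ⟨g, ⟨z, hz⟩, h2, h3⟩ := key (by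
    intro i j
    obtain ⟨w⟩ := hconn.preconnected (e.symm i) (e.symm j)
    have hp := w.toPath.2.length_lt
    obtain ⟨a, b, ha, hab, hb⟩ := walk_P3 w.toPath.1 (by omega)
    refine ⟨e a, e b, ?_, ?_, ?_⟩
    · rcases ha with h | h
      · exact Or.inl (by rw [← h, e.apply_symm_apply])
      · exact Or.inr ((hA i (e a)).mpr (by simpa using h))
    · rcases hab with h | h
      · exact Or.inl (congrArg e h)
      · exact Or.inr ((hA (e a) (e b)).mpr (by simpa using h))
    · rcases hb with h | h
      · exact Or.inl (by rw [h, e.apply_symm_apply])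
      · exact Or.inr ((hA (e b) j).mpr (by simpa using h)))
  refine ⟨fun v => e.symm (g (e v)), ?_, ?_, ?_⟩
  · intro hs
    obtain ⟨v, hv⟩ := hs (e.symm z)
    exact hz (e v) (e.symm.injective hv)
  · intro x
    rcases h2 (e x) with h | h
    · exact Or.inl (by show e.symm (g (e x)) = x; rw [h, e.symm_apply_apply])
    · exact Or.inr (by simpa using (hA _ _).mp h)
  · intro x y hxy
    rcases hxy with rfl | hxy
    · exact Or.inl rfl
    · rcases h3 (e x) (e y) ((hA _ _).mpr (by simpa using hxy)) with h | h
      · exact Or.inl (congrArg e.symm h)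
      · exact Or.inr ((hA _ _).mp h)

theorem small_connected_reducible {V : Type*} [Fintype V] (G : SimpleGraph V)
    (hconn : G.Connected)
    (hcard : Fintype.card V = 2 ∨ Fintype.card V = 3 ∨ Fintype.card V = 4) :
    G.Reducible := by
  classical
  rcases hcard with h | h | h
  · let e : V ≃ Fin 2 := Fintype.equivFinOfCardEq h
    refine build G e (mkA2 (decide (G.Adj (e.symm 0) (e.symm 1)))) ?_ (key2 _) hconn (by omega)
    intro i j
    fin_cases i <;> fin_cases j <;>
      simp [mkA2, decide_eq_true_iff, SimpleGraph.adj_comm]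
  · let e : V ≃ Fin 3 := Fintype.equivFinOfCardEq h
    refine build G e (mkA3 (decide (G.Adj (e.symm 0) (e.symm 1)))
      (decide (G.Adj (e.symm 0) (e.symm 2))) (decide (G.Adj (e.symm 1) (e.symm 2)))) ?_
      (key3 _ _ _) hconn (by omega)
    intro i j
    fin_cases i <;> fin_cases j <;>
      simp [mkA3, decide_eq_true_iff, SimpleGraph.adj_comm] <;> exact G.adj_comm _ _
  · let e : V ≃ Fin 4 := Fintype.equivFinOfCardEq h
    refine build G e (mkA4 (decide (G.Adj (e.symm 0) (e.symm 1)))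
      (decide (G.Adj (e.symm 0) (e.symm 2))) (decide (G.Adj (e.symm 0) (e.symm 3)))
      (decide (G.Adj (e.symm 1) (e.symm 2))) (decide (G.Adj (e.symm 1) (e.symm 3)))
      (decide (G.Adj (e.symm 2) (e.symm 3)))) ?_ (key4 _ _ _ _ _ _) hconn (by omega)
    intro i j
    fin_cases i <;> fin_cases j <;>
      simp [mkA4, decide_eq_true_iff, SimpleGraph.adj_comm] <;> exact G.adj_comm _ _
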